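/- In an increasing Lyndon run, consecutive repetition starts are linked by pss: with μ = S[r_1..r_2) a Lyndon word, r_2 = r_1+|μ|, r_3 = r_2+|μ|, S[r_1..r_3) = μμ, and S_{r_1} ≺ S_{r_2}, it holds that pss(r_2) = r_1. -/
import Mathlib


variable {α : Type*} [LinearOrder α]

/-- A Lyndon word: nonempty and strictly smaller than all of its proper nonempty suffixes. -/
def IsLyndon (s : List α) : Prop :=
  s ≠ [] ∧ ∀ i, 0 < i → i < s.length → List.Lex (· < ·) s (s.drop i)

/-- The `i`-th suffix of `S` (1-indexed); `sfx S 0 = []` plays the role of the sentinel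
suffix `S₀ = $`, and `sfx S (n+1) = []` plays the role of `S_{n+1} = $`
(the empty list is lexicographically smaller than every nonempty list). -/
def sfx (S : List α) (i : ℕ) : List α := if i = 0 then [] else S.drop (i - 1)

open scoped Classical in
/-- `pss S j = max {k ∈ [0,j) : S_k ≺ S_j}`. -/
noncomputable def pss (S : List α) (j : ℕ) : ℕ :=
  Nat.findGreatest (fun k => List.Lex (· < ·) (sfx S k) (sfx S j)) (j - 1)

/-- `nss S i = min {j ∈ (i, n+1] : S_j ≺ S_i}`. -/
noncomputable def nss (S : List α) (i : ℕ) : ℕ :=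
  sInf {j | i < j ∧ j ≤ S.length + 1 ∧ List.Lex (· < ·) (sfx S j) (sfx S i)}

/-- Length of the longest common prefix of two lists. -/
def lcp : List α → List α → ℕ
  | a :: s, b :: t => if a = b then lcp s t + 1 else 0
  | _, _ => 0

/-- The PSS closure: all iterates of `pss` starting from `j`. -/
noncomputable def pssClosure (S : List α) (j : ℕ) : Set ℕ :=
  {k | ∃ m, (pss S)^[m] j = k}

open scoped Classical in
/-- Size of the subtree of node `i` in the PSS tree of `S`. -/
noncomputable def subtreeSize (S : List α) (i : ℕ) : ℕ :=
  ((Finset.range (S.length + 1)).filter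
    (fun j => j = i ∨ ∃ m, 0 < m ∧ (pss S)^[m] j = i)).card

open scoped Classical in
/-- `lam S i`: length of the longest Lyndon word starting at position `i` (1-indexed). -/
noncomputable def lam (S : List α) (i : ℕ) : ℕ :=
  Nat.findGreatest (fun ℓ => IsLyndon ((S.drop (i - 1)).take ℓ)) (S.length + 1 - i)

lemma lex_append_of_length_le {s t : List α} (h : List.Lex (· < ·) s t)
    (hl : t.length ≤ s.length) (u v : List α) :
    List.Lex (· < ·) (s ++ u) (t ++ v) := by
  induction h with
  | nil => simp at hl
  | rel h => exact List.Lex.rel h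
  | cons h ih => exact List.Lex.cons (ih (Nat.le_of_succ_le_succ hl))

/-- in an increasing Lyndon run (`S[r₁..r₃) = μμ`, `S_{r₁} ≺ S_{r₂}`),
consecutive repetition starts are linked by pss: `pss r₂ = r₁`. -/
theorem stmt14 (S μ : List α) (hμ : IsLyndon μ) (r₁ r₂ r₃ : ℕ) (h1 : 1 ≤ r₁)
    (hr2 : r₂ = r₁ + μ.length) (hr3 : r₃ = r₂ + μ.length)
    (hfit : r₁ - 1 + 2 * μ.length ≤ S.length)
    (hocc : (S.drop (r₁ - 1)).take (2 * μ.length) = μ ++ μ)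
    (hinc : List.Lex (· < ·) (sfx S r₁) (sfx S r₂)) :
    pss S r₂ = r₁ := by
  classical
  set L := μ.length with hL
  have hL1 : 1 ≤ L := List.length_pos_iff.mpr hμ.1
  set p := r₁ - 1 with hp
  -- decompose S.drop p
  have hS : S.drop p = μ ++ (μ ++ S.drop (p + 2 * L)) := by
    have h1 := List.take_append_drop (2 * L) (S.drop p)
    rw [hocc, List.drop_drop] at h1
    rw [← h1, List.append_assoc]
  have hdropL : S.drop (p + L) = μ ++ S.drop (p + 2 * L) := by
    have : S.drop (p + L) = (S.drop p).drop L := by rw [List.drop_drop]; try ring_nf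
    rw [this, hS, List.drop_append_of_le_length le_rfl, List.drop_length,
      List.nil_append]
  have hr2' : sfx S r₂ = μ ++ S.drop (p + 2 * L) := by
    have : r₂ ≠ 0 := by omega
    rw [sfx, if_neg this, show r₂ - 1 = p + L by omega, hdropL]
  -- apply findGreatest characterization
  rw [pss, Nat.findGreatest_eq_iff]
  refine ⟨by omega, fun _ => hinc, fun n hn1 hn2 hlex => ?_⟩
  -- n is strictly inside the first μ
  set i := n - r₁ with hi
  have hi1 : 0 < i := by omega
  have hi2 : i < L := by omega
  have hn0 : n ≠ 0 := by omega
  have hsn : sfx S n = μ.drop i ++ (μ ++ S.drop (p + 2 * L)) := by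
    rw [sfx, if_neg hn0, show n - 1 = p + i by omega, ← List.drop_drop, hS,
      List.drop_append_of_le_length (by omega)]
  have hlyn := hμ.2 i hi1 hi2
  have hbig : List.Lex (· < ·) (sfx S r₂) (sfx S n) := by
    rw [hr2', hsn]
    exact lex_append_of_length_le hlyn (by simp) _ _
  exact asymm hbig hlex
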